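/- Let K be a field and let a weighted graph be the join of weighted graphs T₁,…,T_k with marked vertices v₁,…,v_k: vertex set {0} ⊔ V₁ ⊔ … ⊔ V_k (ordered with 0 first), vertices in different V_i, V_j not joined, and vertex 0 joined to each v_j by an edge of weight 1 and to no other vertex. Let T(t) denote the Coxeter polynomial of the join, T_j(t) that of T_j, and T̄_j(t) that of T_j with vertex v_j deleted. Then for all nonzero x, y ∈ K: T(x)·∏_j T_j(y) − T(y)·∏_j T_j(x) = (x + x⁻¹ − y − y⁻¹)·∏_j T_j(x)·T_j(y) + Σ_{j=1}^k (T_j(x)·T̄_j(y) − T_j(y)·T̄_j(x))·∏_{i ≠ j} T_i(x)·T_i(y). -/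

import Mathlib

open Matrix Finset


section Helpers
variable {R : Type*} [CommRing R]

lemma my_det_updateRow_finset_sum {n : Type*} [DecidableEq n] [Fintype n]
    (A : Matrix n n R) (j : n) {ι : Type*} (s : Finset ι) (u : ι → n → R) :
    (A.updateRow j (∑ i ∈ s, u i)).det = ∑ i ∈ s, (A.updateRow j (u i)).det := by
  classical
  induction s using Finset.induction_on with
  | empty =>
      simp only [Finset.sum_empty]
      exact Matrix.det_eq_zero_of_row_eq_zero j (by simp)
  | insert _ _ hk ih =>
      rw [Finset.sum_insert hk, Matrix.det_updateRow_add, ih, Finset.sum_insert hk]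

lemma my_det_updateColumn_finset_sum {n : Type*} [DecidableEq n] [Fintype n]
    (A : Matrix n n R) (j : n) {ι : Type*} (s : Finset ι) (u : ι → n → R) :
    (A.updateCol j (∑ i ∈ s, u i)).det = ∑ i ∈ s, (A.updateCol j (u i)).det := by
  classical
  induction s using Finset.induction_on with
  | empty =>
      simp only [Finset.sum_empty]
      exact Matrix.det_eq_zero_of_column_eq_zero j (by simp)
  | insert _ _ hk ih =>
      rw [Finset.sum_insert hk, Matrix.det_updateCol_add, ih, Finset.sum_insert hk]

lemma my_det_option {κ : Type*} [Fintype κ] [DecidableEq κ]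
    (A : Matrix (Option κ) (Option κ) R) (h : ∀ r, A (some r) none = 0) :
    A.det = (A.submatrix some some).det * A none none := by
  let e : κ ⊕ (PUnit : Type) ≃ Option κ := (Equiv.optionEquivSumPUnit κ).symm
  rw [← Matrix.det_submatrix_equiv_self e A]
  have hb : A.submatrix e e =
      Matrix.fromBlocks (A.submatrix some some) 0
        (Matrix.of fun _ q => A none (some q)) (Matrix.of fun _ _ => A none none) := by
    ext i j
    rcases i with i | i <;> rcases j with j | j <;>
      simp [e, Matrix.fromBlocks, Equiv.optionEquivSumPUnit, h]
  rw [hb, Matrix.det_fromBlocks_zero₁₂,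
    Matrix.det_unique (Matrix.of fun _ _ : (PUnit : Type) => A none none)]
  rfl

lemma my_det_cofactor {n : ℕ} (A : Matrix (Fin (n+1)) (Fin (n+1)) R) (i : Fin (n+1)) :
    (A.updateRow i (Pi.single i 1)).det = (A.submatrix i.succAbove i.succAbove).det := by
  rw [Matrix.det_succ_row _ i, Finset.sum_eq_single i]
  · have h1 : A.updateRow i (Pi.single i 1) i i = 1 := by simp
    have h2 : (A.updateRow i (Pi.single i 1)).submatrix i.succAbove i.succAbove
        = A.submatrix i.succAbove i.succAbove := by
      ext p q
      simp [Matrix.updateRow_apply, Fin.succAbove_ne]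
    have h3 : (-1 : R) ^ ((i : ℕ) + i) = 1 := by
      rw [← two_mul, pow_mul]; norm_num
    rw [h1, h2, h3, one_mul, one_mul]
  · intro j _ hj
    have : A.updateRow i (Pi.single i 1) i j = 0 := by
      simp [Pi.single_apply, hj]
    rw [this]; ring
  · simp

lemma my_det_sigma_block {k : ℕ} {m : Fin k → ℕ}
    (A : Matrix (Σ j : Fin k, Fin (m j + 1)) (Σ j : Fin k, Fin (m j + 1)) R)
    (Bl : ∀ j, Matrix (Fin (m j + 1)) (Fin (m j + 1)) R)
    (hdiag : ∀ j x y, A ⟨j, x⟩ ⟨j, y⟩ = Bl j x y)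
    (hoff : ∀ j j' x y, j ≠ j' → A ⟨j, x⟩ ⟨j', y⟩ = 0) :
    A.det = ∏ j, (Bl j).det := by
  have hbt : A.BlockTriangular Sigma.fst := by
    rintro ⟨j, x⟩ ⟨j', y⟩ h
    exact hoff j j' x y (ne_of_gt h)
  rw [hbt.det]
  have himg : Finset.univ.image (Sigma.fst : (Σ j : Fin k, Fin (m j+1)) → Fin k)
      = Finset.univ := by
    ext a
    simp only [Finset.mem_univ, iff_true, Finset.mem_image]
    exact ⟨⟨a, 0⟩, trivial, rfl⟩
  rw [himg]
  refine Finset.prod_congr rfl fun a _ => ?_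
  let e : Fin (m a + 1) ≃ {i : Σ j : Fin k, Fin (m j + 1) // i.1 = a} :=
    { toFun := fun x => ⟨⟨a, x⟩, rfl⟩
      invFun := fun i => Fin.cast (congrArg (fun c => m c + 1) i.2) i.1.2
      left_inv := fun x => rfl
      right_inv := by rintro ⟨⟨j, x⟩, rfl⟩; rfl }
  rw [← Matrix.det_submatrix_equiv_self e (A.toSquareBlock Sigma.fst a)]
  congr 1
  ext x y
  exact hdiag a x y

end Helpers


theorem coxeter_join_christoffel_darboux {K : Type*} [Field K]
    (k : ℕ) (m : Fin k → ℕ)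
    (a : ∀ j, Fin (m j + 1) → Fin (m j + 1) → K)
    (hsym : ∀ j x y, a j x y = a j y x)
    (v : ∀ j, Fin (m j + 1))
    (Sb : ∀ j, Matrix (Fin (m j + 1)) (Fin (m j + 1)) K)
    (hSb : ∀ j x y, Sb j x y = if x = y then 1 else if x < y then -a j x y else 0)
    (Mb : K → ∀ j, Matrix (Fin (m j + 1)) (Fin (m j + 1)) K)
    (hMb : ∀ t j, Mb t j = t • Sb j + t⁻¹ • (Sb j)ᵀ)
    (M : K → Matrix (Option (Σ j, Fin (m j + 1))) (Option (Σ j, Fin (m j + 1))) K)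
    (hM00 : ∀ t, M t none none = t + t⁻¹)
    (hM0j : ∀ t j x, M t none (some ⟨j, x⟩) = if x = v j then -t else 0)
    (hMj0 : ∀ t j x, M t (some ⟨j, x⟩) none = if x = v j then -t⁻¹ else 0)
    (hMdiag : ∀ t j x y, M t (some ⟨j, x⟩) (some ⟨j, y⟩) = Mb t j x y)
    (hMoff : ∀ t j j' x y, j ≠ j' → M t (some ⟨j, x⟩) (some ⟨j', y⟩) = 0)
    (x y : K) (hx : x ≠ 0) (hy : y ≠ 0) :
    (M x).det * ∏ j, (Mb y j).det - (M y).det * ∏ j, (Mb x j).det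
      = (x + x⁻¹ - y - y⁻¹) * ∏ j, ((Mb x j).det * (Mb y j).det)
        + ∑ j,
            ((Mb x j).det *
                ((Mb y j).submatrix (v j).succAbove (v j).succAbove).det
              - (Mb y j).det *
                ((Mb x j).submatrix (v j).succAbove (v j).succAbove).det) *
              ∏ i ∈ Finset.univ.erase j, ((Mb x i).det * (Mb y i).det) := by
  classical
  have key : ∀ t : K, t ≠ 0 →
      (M t).det = (t + t⁻¹) * ∏ j, (Mb t j).det
        - ∑ j, ((Mb t j).submatrix (v j).succAbove (v j).succAbove).det
            * ∏ i ∈ Finset.univ.erase j, (Mb t i).det := by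
    intro t ht
    -- determinant of the pure block part
    have hblock : ((M t).submatrix some some).det = ∏ j, (Mb t j).det := by
      refine my_det_sigma_block _ (fun j => Mb t j) ?_ ?_
      · intro j x' y'; exact hMdiag t j x' y'
      · intro j j' x' y' h; exact hMoff t j j' x' y' h
    -- split the `none` column
    have hcol : (fun r => M t r none)
        = Pi.single (none : Option (Σ j, Fin (m j + 1))) (t + t⁻¹)
          + ∑ j, Pi.single (some ⟨j, v j⟩ : Option (Σ j, Fin (m j + 1))) (-t⁻¹) := by
      funext r
      rcases r with _ | ⟨j, xx⟩
      · simp [hM00, Pi.single_apply]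
      · rw [Pi.add_apply, Finset.sum_apply, hMj0]
        rw [Pi.single_eq_of_ne (by simp), zero_add, Finset.sum_eq_single j]
        · by_cases hxv : xx = v j
          · subst hxv; simp
          · simp [Pi.single_apply, hxv]
        · intro i _ hij
          simp [Pi.single_apply, Ne.symm hij]
        · simp
    have e1 : (M t).det
        = ((M t).updateCol none (Pi.single none (t + t⁻¹))).det
          + ∑ j, ((M t).updateCol none
              (Pi.single (some ⟨j, v j⟩ : Option (Σ j, Fin (m j + 1))) (-t⁻¹))).det := by
      conv_lhs => rw [← Matrix.updateCol_eq_self (M t) none, hcol]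
      rw [Matrix.det_updateCol_add, my_det_updateColumn_finset_sum]
    -- first term
    have hT1 : ((M t).updateCol none (Pi.single none (t + t⁻¹))).det
        = (t + t⁻¹) * ∏ j, (Mb t j).det := by
      have hsm : (Pi.single (none : Option (Σ j, Fin (m j + 1))) (t + t⁻¹))
          = (t + t⁻¹) • (Pi.single none 1 : Option (Σ j, Fin (m j + 1)) → K) := by
        rw [← Pi.single_smul, smul_eq_mul, mul_one]
      rw [hsm, Matrix.det_updateCol_smul]
      have h0 : ∀ r : (Σ j, Fin (m j + 1)),
          ((M t).updateCol none (Pi.single (none : Option _) (1:K))) (some r) none = 0 := by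
        intro r
        rw [Matrix.updateCol_self]
        exact Pi.single_eq_of_ne (by simp) _
      rw [my_det_option _ h0]
      have hsub : (((M t).updateCol none (Pi.single (none : Option _) (1:K))).submatrix
          some some) = (M t).submatrix some some := by
        ext p q
        simp [Matrix.updateCol_ne]
      rw [hsub, hblock, Matrix.updateCol_self]
      simp
    -- second terms
    have hT2 : ∀ j : Fin k, ((M t).updateCol none
          (Pi.single (some ⟨j, v j⟩ : Option (Σ j, Fin (m j + 1))) (-t⁻¹))).det
        = - (((Mb t j).submatrix (v j).succAbove (v j).succAbove).det
            * ∏ i ∈ Finset.univ.erase j, (Mb t i).det) := by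
      intro j
      have hsm : (Pi.single (some ⟨j, v j⟩ : Option (Σ j, Fin (m j + 1))) (-t⁻¹))
          = (-t⁻¹) • (Pi.single (some ⟨j, v j⟩) 1 : Option (Σ j, Fin (m j + 1)) → K) := by
        rw [← Pi.single_smul, smul_eq_mul, mul_one]
      rw [hsm, Matrix.det_updateCol_smul]
      set N := (M t).updateCol none
          (Pi.single (some ⟨j, v j⟩ : Option (Σ j, Fin (m j + 1))) (1:K)) with hN
      have hNsome : ∀ (p q : Σ j, Fin (m j + 1)), N (some p) (some q) = M t (some p) (some q) := by
        intro p q; simp [N, Matrix.updateCol_ne]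
      have hNcol : ∀ r : Option (Σ j, Fin (m j + 1)),
          N r none = (Pi.single (some ⟨j, v j⟩) (1:K) : Option (Σ j, Fin (m j + 1)) → K) r := by
        intro r; simp [N, Matrix.updateCol_self]
      have hNrow : ∀ p : (Σ j, Fin (m j + 1)), N none (some p) = M t none (some p) := by
        intro p; simp [N, Matrix.updateCol_ne]
      have hrow : N none = ∑ i, Pi.single (some ⟨i, v i⟩ : Option (Σ j, Fin (m j + 1))) (-t) := by
        funext c
        rcases c with _ | ⟨i', xx⟩
        · rw [hNcol, Finset.sum_apply]
          simp [Pi.single_apply]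
        · rw [hNrow, hM0j, Finset.sum_apply, Finset.sum_eq_single i']
          · by_cases hxv : xx = v i'
            · subst hxv; simp
            · simp [Pi.single_apply, hxv]
          · intro i _ hij
            simp [Pi.single_apply, Ne.symm hij]
          · simp
      have e2 : N.det = ∑ i, (N.updateRow none
          (Pi.single (some ⟨i, v i⟩ : Option (Σ j, Fin (m j + 1))) (-t))).det := by
        conv_lhs => rw [← Matrix.updateRow_eq_self N none, hrow]
        rw [my_det_updateRow_finset_sum]
      have hPdet : ∀ i : Fin k, (N.updateRow none
            (Pi.single (some ⟨i, v i⟩ : Option (Σ j, Fin (m j + 1))) (1:K))).det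
          = if i = j then - (((Mb t j).submatrix (v j).succAbove (v j).succAbove).det
              * ∏ l ∈ Finset.univ.erase j, (Mb t l).det) else 0 := by
        intro i
        set P := N.updateRow none
            (Pi.single (some ⟨i, v i⟩ : Option (Σ j, Fin (m j + 1))) (1:K)) with hPdef
        have hProw : ∀ c, P none c
            = (Pi.single (some ⟨i, v i⟩) (1:K) : Option (Σ j, Fin (m j + 1)) → K) c := by
          intro c; simp [P]
        have hPsome : ∀ (r : Σ j, Fin (m j + 1)) c, P (some r) c = N (some r) c := by
          intro r c; simp [P, Matrix.updateRow_ne]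
        by_cases hij : i = j
        · subst hij
          rw [if_pos rfl]
          set s : Equiv.Perm (Option (Σ j, Fin (m j + 1))) :=
            Equiv.swap none (some ⟨i, v i⟩) with hsdef
          have hsign : Equiv.Perm.sign s = -1 := Equiv.Perm.sign_swap (by simp)
          have hperm := Matrix.det_permute s P
          rw [hsign] at hperm
          have hQ : P.det = - (P.submatrix (⇑s) id).det := by
            rw [hperm]; simp
          have hs1 : s none = some ⟨i, v i⟩ := Equiv.swap_apply_left _ _
          have hs2 : s (some ⟨i, v i⟩) = none := Equiv.swap_apply_right _ _
          have hs3 : ∀ r : Σ j, Fin (m j + 1), r ≠ ⟨i, v i⟩ → s (some r) = some r := by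
            intro r hr
            exact Equiv.swap_apply_of_ne_of_ne (by simp) (by simp [hr])
          have hQcol : ∀ r : (Σ j, Fin (m j + 1)), (P.submatrix (⇑s) id) (some r) none = 0 := by
            intro r
            by_cases hr : r = ⟨i, v i⟩
            · subst hr
              show P (s (some _)) none = 0
              rw [hs2, hProw]
              exact Pi.single_eq_of_ne (by simp) _
            · show P (s (some r)) none = 0
              rw [hs3 r hr, hPsome, hNcol]
              exact Pi.single_eq_of_ne (by simp [hr]) _
          have hQnn : (P.submatrix (⇑s) id) none none = 1 := by
            show P (s none) none = 1
            rw [hs1, hPsome, hNcol]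
            simp
          have hQdet := my_det_option (P.submatrix (⇑s) id) hQcol
          rw [hQnn, mul_one] at hQdet
          have hQsub : (((P.submatrix (⇑s) id)).submatrix some some).det
              = ∏ l, (if l = i then (Mb t l).updateRow (v l) (Pi.single (v l) 1)
                  else Mb t l).det := by
            refine my_det_sigma_block _
              (fun l => if l = i then (Mb t l).updateRow (v l) (Pi.single (v l) 1)
                else Mb t l) ?_ ?_
            · intro l xx yy
              by_cases hl : l = i
              · subst hl
                rw [if_pos rfl]
                by_cases hxx : xx = v l
                · subst hxx
                  show P (s (some ⟨l, v l⟩)) (some ⟨l, yy⟩)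
                      = (Mb t l).updateRow (v l) (Pi.single (v l) 1) (v l) yy
                  rw [hs2, hProw, Matrix.updateRow_self]
                  simp [Pi.single_apply]
                · show P (s (some ⟨l, xx⟩)) (some ⟨l, yy⟩) = _
                  rw [hs3 _ (by simp [hxx]), hPsome, hNsome, hMdiag,
                    Matrix.updateRow_ne hxx]
              · rw [if_neg hl]
                show P (s (some ⟨l, xx⟩)) (some ⟨l, yy⟩) = _
                rw [hs3 _ (by simp [Sigma.ext_iff, hl]), hPsome, hNsome, hMdiag]
            · intro l l' xx yy hll
              by_cases hl : (⟨l, xx⟩ : Σ j, Fin (m j + 1)) = ⟨i, v i⟩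
              · show P (s (some ⟨l, xx⟩)) (some ⟨l', yy⟩) = 0
                rw [hl, hs2, hProw]
                refine Pi.single_eq_of_ne (fun hmk => ?_) _
                have h2 : l' = i := congrArg Sigma.fst (Option.some.inj hmk)
                have h3 : l = i := congrArg Sigma.fst hl
                exact hll (h3.trans h2.symm)
              · show P (s (some ⟨l, xx⟩)) (some ⟨l', yy⟩) = 0
                rw [hs3 _ hl, hPsome, hNsome, hMoff t l l' xx yy hll]
          rw [hQ, hQdet, hQsub]
          rw [← Finset.mul_prod_erase Finset.univ _ (Finset.mem_univ i)]
          rw [if_pos rfl, my_det_cofactor]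
          congr 2
          refine Finset.prod_congr rfl fun l hl => ?_
          rw [if_neg (Finset.ne_of_mem_erase hl)]
        · rw [if_neg hij]
          rw [Matrix.det_apply]
          apply Finset.sum_eq_zero
          intro σ _
          have hzero : ∏ c, P (σ c) c = 0 := by
            by_contra hne
            have hcne : ∀ c, P (σ c) c ≠ 0 := fun c h =>
              hne (Finset.prod_eq_zero (Finset.mem_univ c) h)
            have hσ0 : σ none = some ⟨j, v j⟩ := by
              have h := hcne none
              rcases hcase : σ none with _ | r
              · rw [hcase, hProw] at h
                exact absurd (Pi.single_eq_of_ne (by simp) _) h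
              · rw [hcase, hPsome, hNcol] at h
                by_contra hr
                exact h (Pi.single_eq_of_ne hr _)
            have hσblk : ∀ yv : Fin (m j + 1), ∃ xv : Fin (m j + 1),
                σ (some ⟨j, yv⟩) = some ⟨j, xv⟩ := by
              intro yv
              have h := hcne (some ⟨j, yv⟩)
              rcases hcase : σ (some ⟨j, yv⟩) with _ | ⟨j', xv⟩
              · rw [hcase, hProw] at h
                refine absurd (Pi.single_eq_of_ne ?_ _) h
                simp [Sigma.ext_iff]
                intro hji; exact absurd hji.symm hij
              · by_cases hj' : j' = j
                · subst hj'; exact ⟨xv, rfl⟩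
                · rw [hcase, hPsome, hNsome, hMoff t j' j xv yv hj'] at h
                  exact absurd rfl h
            have hmaps : ∀ c ∈ insert none
                ((Finset.univ : Finset (Fin (m j + 1))).image
                  (fun yv => (some ⟨j, yv⟩ : Option (Σ j, Fin (m j + 1))))),
                σ c ∈ (Finset.univ : Finset (Fin (m j + 1))).image
                  (fun yv => (some ⟨j, yv⟩ : Option (Σ j, Fin (m j + 1)))) := by
              intro c hc
              rcases Finset.mem_insert.mp hc with rfl | hc
              · rw [hσ0]
                exact Finset.mem_image.mpr ⟨v j, Finset.mem_univ _, rfl⟩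
              · obtain ⟨yv, _, rfl⟩ := Finset.mem_image.mp hc
                obtain ⟨xv, hxv⟩ := hσblk yv
                rw [hxv]
                exact Finset.mem_image.mpr ⟨xv, Finset.mem_univ _, rfl⟩
            have hinj2 : Function.Injective
                (fun yv : Fin (m j + 1) => (some ⟨j, yv⟩ : Option (Σ j, Fin (m j + 1)))) :=
              (Option.some_injective _).comp sigma_mk_injective
            have hcard := Finset.card_le_card_of_injOn (fun c => σ c) hmaps
              (σ.injective.injOn)
            rw [Finset.card_insert_of_notMem (by simp),
              Finset.card_image_of_injective _ hinj2] at hcard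
            simp only [Finset.card_univ, Fintype.card_fin] at hcard
            omega
          rw [hzero, smul_zero]
      rw [e2]
      have hterm : ∀ i : Fin k,
          (N.updateRow none (Pi.single (some ⟨i, v i⟩ : Option (Σ j, Fin (m j + 1))) (-t))).det
          = (-t) * (N.updateRow none
              (Pi.single (some ⟨i, v i⟩ : Option (Σ j, Fin (m j + 1))) (1:K))).det := by
        intro i
        have hone : (Pi.single (some ⟨i, v i⟩ : Option (Σ j, Fin (m j + 1))) (-t))
            = (-t) • (Pi.single (some ⟨i, v i⟩) 1 : Option (Σ j, Fin (m j + 1)) → K) := by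
          rw [← Pi.single_smul, smul_eq_mul, mul_one]
        rw [hone, Matrix.det_updateRow_smul]
      rw [Finset.sum_congr rfl fun i _ => by rw [hterm i, hPdet i]]
      simp only [mul_ite, mul_zero, Finset.sum_ite_eq', Finset.mem_univ, if_true]
      field_simp
    rw [e1, hT1]
    rw [Finset.sum_congr rfl fun j _ => hT2 j]
    rw [Finset.sum_neg_distrib]
    ring
  rw [key x hx, key y hy]
  have hprod : ∏ j, ((Mb x j).det * (Mb y j).det)
      = (∏ j, (Mb x j).det) * ∏ j, (Mb y j).det := Finset.prod_mul_distrib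
  have hS : (∑ j, ((Mb y j).submatrix (v j).succAbove (v j).succAbove).det
          * ∏ i ∈ Finset.univ.erase j, (Mb y i).det) * (∏ j, (Mb x j).det)
      - (∑ j, ((Mb x j).submatrix (v j).succAbove (v j).succAbove).det
          * ∏ i ∈ Finset.univ.erase j, (Mb x i).det) * (∏ j, (Mb y j).det)
      = ∑ j, ((Mb x j).det * ((Mb y j).submatrix (v j).succAbove (v j).succAbove).det
          - (Mb y j).det * ((Mb x j).submatrix (v j).succAbove (v j).succAbove).det)
          * ∏ i ∈ Finset.univ.erase j, ((Mb x i).det * (Mb y i).det) := by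
    rw [Finset.sum_mul, Finset.sum_mul, ← Finset.sum_sub_distrib]
    refine Finset.sum_congr rfl fun j _ => ?_
    rw [Finset.prod_mul_distrib,
      ← Finset.mul_prod_erase Finset.univ (fun i => (Mb x i).det) (Finset.mem_univ j),
      ← Finset.mul_prod_erase Finset.univ (fun i => (Mb y i).det) (Finset.mem_univ j)]
    ring
  rw [hprod, ← hS]
  ring
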